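/- arXiv:2010.02564 — 3 statements merged into one kernel-verified Lean document; each statement's English description precedes it below -/
import Mathlib

section
/- Consider the extended Cell Transmission Model with time step T > 0, cell length L = V·T, free-flow speed V > 0 and congestion wave speed W satisfying 0 < W ≤ V. Suppose at time t all densities satisfy 0 ≤ ρ_i(t) ≤ P for i = 1, …, N+1 (where ρ_{N+1} is the downstream boundary density), the interface flows are q_i(t) = min(U_i(t)·ρ_i(t), Q_i(t), W·(P − ρ_{i+1}(t))) for i = 1, …, N with 0 ≤ U_i(t) ≤ V and Q_i(t) ≥ 0, and the inflow satisfies 0 ≤ q_0(t) ≤ W·(P − ρ_1(t)). Then the updated densities ρ_i(t+1) = ρ_i(t) + (T/L)·(q_{i−1}(t) − q_i(t)) again satisfy 0 ≤ ρ_i(t+1) ≤ P for all i = 1, …, N. That is, the physically admissible density interval [0, P] is invariant under the model. -/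
/-- Invariance of the physically admissible density interval
`[0, P]` under the extended CTM with `L = V·T`, `0 < W ≤ V`, flows given by
the min-formula, speeds `U i ∈ [0, V]`, capacities `Q i ≥ 0`, and admissible
inflow `0 ≤ q 0 ≤ W(P − ρ 1)`. -/
theorem ctm_density_interval_invariant
    (N : ℕ) (T L V W P : ℝ)
    (hT : 0 < T) (hV : 0 < V) (hL : L = V * T)
    (hW : 0 < W) (hWV : W ≤ V)
    (ρ ρ' U Q q : ℕ → ℝ)
    (hρ : ∀ i ∈ Finset.Icc 1 (N + 1), 0 ≤ ρ i ∧ ρ i ≤ P)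
    (hq : ∀ i ∈ Finset.Icc 1 N,
      q i = min (U i * ρ i) (min (Q i) (W * (P - ρ (i + 1)))))
    (hU : ∀ i ∈ Finset.Icc 1 N, 0 ≤ U i ∧ U i ≤ V)
    (hQ : ∀ i ∈ Finset.Icc 1 N, 0 ≤ Q i)
    (hq0 : 0 ≤ q 0 ∧ q 0 ≤ W * (P - ρ 1))
    (hupd : ∀ i ∈ Finset.Icc 1 N, ρ' i = ρ i + (T / L) * (q (i - 1) - q i)) :
    ∀ i ∈ Finset.Icc 1 N, 0 ≤ ρ' i ∧ ρ' i ≤ P := by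
  intro i hi
  rw [Finset.mem_Icc] at hi
  obtain ⟨hi1, hiN⟩ := hi
  have hmem : i ∈ Finset.Icc 1 N := Finset.mem_Icc.mpr ⟨hi1, hiN⟩
  have hTL : T / L = 1 / V := by rw [hL]; field_simp
  have hρi := hρ i (Finset.mem_Icc.mpr ⟨hi1, by omega⟩)
  have hρi1 := hρ (i + 1) (Finset.mem_Icc.mpr ⟨by omega, by omega⟩)
  have hqi := hq i hmem
  have hUi := hU i hmem
  have hQi := hQ i hmem
  have hqi_nonneg : 0 ≤ q i := by
    rw [hqi]
    have h1 : 0 ≤ W * (P - ρ (i + 1)) := by nlinarith [hρi1.2]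
    exact le_min (mul_nonneg hUi.1 hρi.1) (le_min hQi h1)
  have hqi_le : q i ≤ V * ρ i := by
    rw [hqi]
    exact le_trans (min_le_left _ _) (mul_le_mul_of_nonneg_right hUi.2 hρi.1)
  have hqm_nonneg : 0 ≤ q (i - 1) := by
    rcases Nat.eq_or_lt_of_le hi1 with h | h
    · rw [← h]; simpa using hq0.1
    · have hm : i - 1 ∈ Finset.Icc 1 N := Finset.mem_Icc.mpr ⟨by omega, by omega⟩
      have hρm := hρ (i - 1) (Finset.mem_Icc.mpr ⟨by omega, by omega⟩)
      have hρm1 := hρ (i - 1 + 1) (Finset.mem_Icc.mpr ⟨by omega, by omega⟩)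
      rw [hq _ hm]
      have h1 : 0 ≤ W * (P - ρ (i - 1 + 1)) := by nlinarith [hρm1.2]
      exact le_min (mul_nonneg (hU _ hm).1 hρm.1) (le_min (hQ _ hm) h1)
  have hqm_le : q (i - 1) ≤ W * (P - ρ i) := by
    rcases Nat.eq_or_lt_of_le hi1 with h | h
    · rw [← h]; simpa using hq0.2
    · have hm : i - 1 ∈ Finset.Icc 1 N := Finset.mem_Icc.mpr ⟨by omega, by omega⟩
      have hii : i - 1 + 1 = i := by omega
      rw [hq _ hm, hii]
      exact le_trans (min_le_right _ _) (min_le_right _ _)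
  rw [hupd i hmem, hTL]
  have key : V * (ρ i + 1 / V * (q (i - 1) - q i)) = V * ρ i + (q (i - 1) - q i) := by
    field_simp
  constructor
  · have hlo : 0 ≤ V * (ρ i + 1 / V * (q (i - 1) - q i)) := by
      rw [key]; linarith
    exact nonneg_of_mul_nonneg_right hlo hV
  · have hhi : V * (ρ i + 1 / V * (q (i - 1) - q i)) ≤ V * P := by
      rw [key]
      nlinarith [hρi.2, mul_le_mul_of_nonneg_right hWV (sub_nonneg.mpr hρi.2)]
    exact le_of_mul_le_mul_left hhi hV
end

section
/- Let V, W, P, σ be positive reals with 0 < σ < P and V·σ = W·(P − σ), and let α ∈ (0, 1]. For a stop-and-go wave of density ρ_c ∈ (σ, P], define the discharged density ρ_d = (W/V)·(P − (1−α)·σ − α·ρ_c). Then (1−α)·σ ≤ ρ_d < σ, and ρ_d is strictly decreasing as a function of ρ_c on (σ, P]. Consequently the discharging flow V·ρ_d is strictly smaller than the road capacity V·σ, i.e., traffic downstream of a stop-and-go wave flows below capacity. -/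
/-- For a stop-and-go wave of density `ρ_c ∈ (σ, P]`, the
discharged density `ρ_d = (W/V)(P − (1−α)σ − αρ_c)` satisfies
`(1−α)σ ≤ ρ_d < σ`, is strictly decreasing in `ρ_c`, and the discharging
flow `V·ρ_d` is strictly below the capacity `V·σ`. -/
theorem discharged_density_below_critical
    (V W P σ α ρc ρd : ℝ)
    (hV : 0 < V) (hW : 0 < W) (hP : 0 < P)
    (hσ : 0 < σ) (hσP : σ < P)
    (hfd : V * σ = W * (P - σ))
    (hα : α ∈ Set.Ioc (0 : ℝ) 1)
    (hρc : ρc ∈ Set.Ioc σ P)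
    (hρd : ρd = (W / V) * (P - (1 - α) * σ - α * ρc)) :
    (1 - α) * σ ≤ ρd ∧ ρd < σ
    ∧ StrictAntiOn (fun r => (W / V) * (P - (1 - α) * σ - α * r)) (Set.Ioc σ P)
    ∧ V * ρd < V * σ := by
  obtain ⟨hα0, hα1⟩ := hα
  obtain ⟨hρc1, hρc2⟩ := hρc
  have hWV : 0 < W / V := div_pos hW hV
  have hσeq : (W / V) * (P - σ) = σ := by
    field_simp
    linarith [hfd]
  have hlt : ρd < σ := by
    have : P - (1 - α) * σ - α * ρc < P - σ := by nlinarith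
    calc ρd < (W / V) * (P - σ) := by rw [hρd]; exact (mul_lt_mul_iff_right₀ hWV).2 this
      _ = σ := hσeq
  have hle : (1 - α) * σ ≤ ρd := by
    have h1 : (1 - α) * (P - σ) ≤ P - (1 - α) * σ - α * ρc := by nlinarith
    calc (1 - α) * σ = (1 - α) * ((W / V) * (P - σ)) := by rw [hσeq]
      _ = (W / V) * ((1 - α) * (P - σ)) := by ring
      _ ≤ ρd := by rw [hρd]; exact (mul_le_mul_iff_right₀ hWV).2 h1
  refine ⟨hle, hlt, ?_, (mul_lt_mul_iff_right₀ hV).2 hlt⟩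
  intro a _ b _ hab
  have : P - (1 - α) * σ - α * b < P - (1 - α) * σ - α * a := by nlinarith
  exact (mul_lt_mul_iff_right₀ hWV).2 this
end

section
/- Let V, σ, σ_b, ρ_d, λ_d, ρ̄ be reals with s := σ − σ_b, s < ρ_d, s < ρ̄, and λ_d < V. Suppose d, n : ℝ → ℝ are differentiable and, for a constant actuator speed u, satisfy the linear dynamics d′(t) = λ_d − u and n′(t) = (V − u)·s − (V − λ_d)·ρ_d, with initial conditions d(0) > 0 and n(0) = ρ̄·d(0) (the number of vehicles between the actuator and the wave front equals the average density times the gap). If u is chosen as u = (V·(ρ_d − s) + λ_d·(ρ̄ − ρ_d)) / (ρ̄ − s), then u > λ_d, and at the time θ = d(0)/(u − λ_d) > 0 both quantities vanish simultaneously: d(θ) = 0 and n(θ) = 0. Moreover, this u is the unique constant speed for which n and d vanish at the same positive time. -/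
lemma lin_of_deriv_const (f : ℝ → ℝ) (c : ℝ) (hf : Differentiable ℝ f)
    (h : ∀ t, deriv f t = c) : ∀ t, f t = f 0 + c * t := by
  intro t
  have hg : Differentiable ℝ (fun t => f t - c * t) :=
    hf.sub (differentiable_id.const_mul c)
  have hz : ∀ x, deriv (fun t => f t - c * t) x = 0 := by
    intro x
    have hh : HasDerivAt (fun t => f t - c * t) (c - c * 1) x := by
      exact ((hf x).hasDerivAt.sub ((hasDerivAt_id' x).const_mul c)).congr_deriv (by rw [h x])
    simpa using hh.deriv
  have := is_const_of_deriv_eq_zero hg hz t 0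
  simp at this
  linarith

/-- With gap dynamics `d' = λ_d − u` and vehicle-count dynamics
`n' = (V−u)(σ−σ_b) − (V−λ_d)ρ_d`, initial data `d(0) > 0`, `n(0) = ρ̄·d(0)`,
the speed `u = (V(ρ_d−s) + λ_d(ρ̄−ρ_d))/(ρ̄−s)` (with `s = σ−σ_b`) satisfies
`u > λ_d` and makes `d` and `n` vanish simultaneously at the positive time
`θ = d(0)/(u−λ_d)`; moreover it is the unique such constant speed. -/
theorem actuator_speed_dissipates_wave
    (V σ σb ρd lamd ρbar u : ℝ) (d n : ℝ → ℝ)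
    (hρd : σ - σb < ρd) (hρbar : σ - σb < ρbar) (hlamd : lamd < V)
    (hdiff_d : Differentiable ℝ d) (hdiff_n : Differentiable ℝ n)
    (hd' : ∀ t, deriv d t = lamd - u)
    (hn' : ∀ t, deriv n t = (V - u) * (σ - σb) - (V - lamd) * ρd)
    (hd0 : 0 < d 0) (hn0 : n 0 = ρbar * d 0)
    (hu : u = (V * (ρd - (σ - σb)) + lamd * (ρbar - ρd)) / (ρbar - (σ - σb))) :
    lamd < u
    ∧ 0 < d 0 / (u - lamd)
    ∧ d (d 0 / (u - lamd)) = 0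
    ∧ n (d 0 / (u - lamd)) = 0
    ∧ ∀ (u2 : ℝ) (d2 n2 : ℝ → ℝ),
        Differentiable ℝ d2 → Differentiable ℝ n2 →
        (∀ t, deriv d2 t = lamd - u2) →
        (∀ t, deriv n2 t = (V - u2) * (σ - σb) - (V - lamd) * ρd) →
        d2 0 = d 0 → n2 0 = n 0 →
        (∃ θ > (0 : ℝ), d2 θ = 0 ∧ n2 θ = 0) →
        u2 = u := by
  have hbs : (0:ℝ) < ρbar - (σ - σb) := by linarith
  have hueq : u * (ρbar - (σ - σb)) = V * (ρd - (σ - σb)) + lamd * (ρbar - ρd) := by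
    rw [hu]; field_simp
  have hul : u - lamd = (V - lamd) * (ρd - (σ - σb)) / (ρbar - (σ - σb)) := by
    field_simp
    nlinarith [hueq]
  have hpos : 0 < u - lamd := by
    rw [hul]
    exact div_pos (mul_pos (by linarith) (by linarith)) hbs
  have hθ : 0 < d 0 / (u - lamd) := div_pos hd0 hpos
  have hdlin := lin_of_deriv_const d (lamd - u) hdiff_d hd'
  have hnlin := lin_of_deriv_const n ((V - u) * (σ - σb) - (V - lamd) * ρd) hdiff_n hn'
  have hslope : (V - u) * (σ - σb) - (V - lamd) * ρd = -ρbar * (u - lamd) := by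
    nlinarith [hueq]
  have hdθ : d (d 0 / (u - lamd)) = 0 := by
    rw [hdlin]
    field_simp
    ring
  have hnθ : n (d 0 / (u - lamd)) = 0 := by
    rw [hnlin, hn0, hslope]
    field_simp
    ring
  refine ⟨by linarith, hθ, hdθ, hnθ, ?_⟩
  intro u2 d2 n2 hdiff_d2 hdiff_n2 hd2' hn2' hd20 hn20 ⟨θ, hθpos, hd2θ, hn2θ⟩
  have hdlin2 := lin_of_deriv_const d2 (lamd - u2) hdiff_d2 hd2'
  have hnlin2 := lin_of_deriv_const n2 ((V - u2) * (σ - σb) - (V - lamd) * ρd) hdiff_n2 hn2'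
  rw [hdlin2, hd20] at hd2θ
  rw [hnlin2, hn20, hn0] at hn2θ
  -- from hd2θ : d 0 + (lamd - u2) * θ = 0
  -- from hn2θ : ρbar * d 0 + ((V-u2)*(σ-σb) - (V-lamd)*ρd) * θ = 0
  have key : (u2 * (ρbar - (σ - σb)) - (V * (ρd - (σ - σb)) + lamd * (ρbar - ρd))) * θ = 0 := by
    linear_combination hn2θ - ρbar * hd2θ
  have : u2 * (ρbar - (σ - σb)) = V * (ρd - (σ - σb)) + lamd * (ρbar - ρd) := by
    rcases mul_eq_zero.mp key with h | h
    · linarith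
    · linarith
  have := this.trans hueq.symm
  exact mul_right_cancel₀ (ne_of_gt hbs) this
end
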